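/- Let ρ be a complex number with 1 − 1/(4L) ≤ Re(ρ) < 1 and |Im(ρ)| > 1/(4L) for some L > 0. Then 0 < 1/(1−ρ) + 1/(1−ρ̄) < 5·(1/(1 + 1/L − ρ) + 1/(1 + 1/L − ρ̄)). -/
import Mathlib


open Complex in
/-- Let `ρ ∈ ℂ` with `1 - 1/(4L) ≤ Re(ρ) < 1` and `|Im(ρ)| > 1/(4L)` for some `L > 0`. Then
`0 < 1/(1-ρ) + 1/(1-ρ̄) < 5·(1/(1 + 1/L - ρ) + 1/(1 + 1/L - ρ̄))` (these sums of
complex-conjugate terms are real, and the inequalities are between their real values). -/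
theorem zero_sum_lt_5 (L : ℝ) (hL : 0 < L) (ρ : ℂ)
    (h0 : 1 - 1 / (4 * L) ≤ ρ.re) (h1 : ρ.re < 1) (h2 : 1 / (4 * L) < |ρ.im|) :
    0 < (1 / (1 - ρ) + 1 / (1 - (starRingEnd ℂ) ρ)).re ∧
      (1 / (1 - ρ) + 1 / (1 - (starRingEnd ℂ) ρ)).re <
        5 * (1 / (1 + 1 / L - ρ) + 1 / (1 + 1 / L - (starRingEnd ℂ) ρ)).re := by
  set a : ℝ := 1 - ρ.re with ha_def
  set b : ℝ := ρ.im with hb_def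
  have ha : 0 < a := by rw [ha_def]; linarith
  have haU : a ≤ 1 / (4 * L) := by rw [ha_def]; linarith
  have hL4 : 0 < 1 / (4 * L) := by positivity
  have hb2 : (1 / (4 * L))^2 < b^2 := by
    nlinarith [_root_.sq_abs b, abs_nonneg b, h2, hL4]
  have hb0 : 0 < b ^ 2 := lt_trans (by positivity) hb2
  have hD : 0 < a ^ 2 + b ^ 2 := by positivity
  have hD' : 0 < (a + 1 / L) ^ 2 + b ^ 2 := by positivity
  have e1 : (1 / (1 - ρ) + 1 / (1 - (starRingEnd ℂ) ρ)).re = 2 * a / (a ^ 2 + b ^ 2) := by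
    simp [Complex.div_re, Complex.normSq_apply, ha_def, hb_def]
    ring
  have e2 : (1 / (1 + 1 / L - ρ) + 1 / (1 + 1 / L - (starRingEnd ℂ) ρ)).re
      = 2 * (a + 1 / L) / ((a + 1 / L) ^ 2 + b ^ 2) := by
    simp [Complex.div_re, Complex.normSq_apply, ha_def, hb_def]
    ring
  rw [e1, e2]
  constructor
  · positivity
  · have h5 : (5:ℝ) * (2 * (a + 1 / L) / ((a + 1 / L) ^ 2 + b ^ 2))
        = 10 * (a + 1 / L) / ((a + 1 / L) ^ 2 + b ^ 2) := by ring
    rw [h5, div_lt_div_iff₀ hD hD']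
    have hc : 0 < 1 / L := by positivity
    set c : ℝ := 1 / L with hc_def
    have haU' : 4 * a ≤ c := by
      have h4 : (4:ℝ) * (1 / (4 * L)) = 1 / L := by field_simp
      rw [hc_def]
      linarith [haU, h4]
    have hb2' : c ^ 2 / 16 < b ^ 2 := by
      have h16 : (1 / (4 * L)) ^ 2 = c ^ 2 / 16 := by rw [hc_def]; field_simp; ring
      linarith [hb2]
    nlinarith [mul_pos ha ha, mul_pos (mul_pos ha ha) ha, sq_nonneg (c - 4 * a),
      mul_nonneg (mul_nonneg ha.le ha.le) (sub_nonneg.2 haU'),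
      mul_nonneg (mul_nonneg ha.le (sub_nonneg.2 haU')) (sub_nonneg.2 haU'),
      mul_nonneg (mul_nonneg (sub_nonneg.2 haU') (sub_nonneg.2 haU')) (sub_nonneg.2 haU'),
      mul_pos hb0 ha, mul_pos hb0 hc,
      mul_lt_mul_of_pos_right hb2' (show (0:ℝ) < 4 * a + 5 * c by linarith)]
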